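/- Let ρ and σ be density matrices on a bipartite Hilbert space of total dimension d, with ‖ρ - σ‖₁ ≤ ε. Then the logarithmic negativities satisfy |E_N(ρ) - E_N(σ)| ≤ √d · ε / ln 2, where E_N(ρ) = log₂ ‖ρ^{T_A}‖₁. -/

import Mathlib

set_option linter.unusedSectionVars false

open scoped ComplexOrder

variable {a b : Type*} [Fintype a] [Fintype b] [DecidableEq a] [DecidableEq b]

/-- The trace norm (Schatten 1-norm): the sum of the singular values. -/
noncomputable def traceNorm (M : Matrix (a × b) (a × b) ℂ) : ℝ :=
  ∑ i, Real.sqrt ((Matrix.isHermitian_conjTranspose_mul_self M).eigenvalues i)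

/-- The partial transpose with respect to the first tensor factor. -/
def partialTranspose (M : Matrix (a × b) (a × b) ℂ) : Matrix (a × b) (a × b) ℂ :=
  fun p q => M (q.1, p.2) (p.1, q.2)

/-- The logarithmic negativity `E_N(ρ) = log₂ ‖ρ^{T_A}‖₁`. -/
noncomputable def logNeg (ρ : Matrix (a × b) (a × b) ℂ) : ℝ :=
  Real.logb 2 (traceNorm (partialTranspose ρ))



open Matrix Polynomial

variable {n : Type*} [Fintype n] [DecidableEq n]

noncomputable def schatten1 (M : Matrix n n ℂ) : ℝ :=
  ∑ i, Real.sqrt ((Matrix.isHermitian_conjTranspose_mul_self M).eigenvalues i)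

lemma charpoly_unitary_conj (U : Matrix.unitaryGroup n ℂ) (A : Matrix n n ℂ) :
    ((U : Matrix n n ℂ) * A * star (U : Matrix n n ℂ)).charpoly = A.charpoly := by
  have hU : (U : Matrix n n ℂ) * star (U : Matrix n n ℂ) = 1 :=
    Matrix.mem_unitaryGroup_iff.mp U.2
  set f : Matrix n n ℂ →+* Matrix n n ℂ[X] := RingHom.mapMatrix (m := n) (C : ℂ →+* ℂ[X])
  have key : charmatrix ((U : Matrix n n ℂ) * A * star (U : Matrix n n ℂ))
      = f (U : Matrix n n ℂ) * charmatrix A * f (star (U : Matrix n n ℂ)) := by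
    rw [charmatrix, charmatrix, mul_sub, sub_mul]
    congr 1
    · rw [← (Matrix.scalar_commute (X : ℂ[X]) (fun r' => Commute.all _ _)
        (f (U : Matrix n n ℂ))).eq, mul_assoc, ← _root_.map_mul, hU, _root_.map_one f, mul_one]
    · rw [← _root_.map_mul, ← _root_.map_mul]
  have hdet : (f (U : Matrix n n ℂ)).det * (f (star (U : Matrix n n ℂ))).det = 1 := by
    rw [← Matrix.det_mul, ← _root_.map_mul, hU, _root_.map_one f, Matrix.det_one]
  rw [Matrix.charpoly, Matrix.charpoly, key, Matrix.det_mul, Matrix.det_mul,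
    mul_right_comm, hdet, one_mul]

lemma charpoly_diagonal' (d : n → ℂ) :
    (Matrix.diagonal d).charpoly = ∏ i, (X - C (d i)) := by
  rw [Matrix.charpoly]
  have : charmatrix (Matrix.diagonal d) = Matrix.diagonal fun i => (X : ℂ[X]) - C (d i) := by
    ext i j
    by_cases h : i = j
    · subst h; simp
    · simp [h, Matrix.diagonal_apply_ne _ h]
  rw [this, Matrix.det_diagonal]

lemma roots_charpoly_of_conj {A : Matrix n n ℂ} (U : Matrix.unitaryGroup n ℂ) (g : n → ℂ)
    (h : A = (U : Matrix n n ℂ) * Matrix.diagonal g * star (U : Matrix n n ℂ)) :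
    A.charpoly.roots = Finset.univ.val.map g := by
  rw [h, charpoly_unitary_conj, charpoly_diagonal']
  rw [Finset.prod_eq_multiset_prod]
  have : (Finset.univ.val.map fun i => X - C (g i))
      = ((Finset.univ.val.map g).map fun a => X - C a) := by
    rw [Multiset.map_map]; rfl
  rw [this, Polynomial.roots_multiset_prod_X_sub_C]

lemma eig_multiset {A : Matrix n n ℂ} (hA : A.IsHermitian) (U : Matrix.unitaryGroup n ℂ)
    (f : n → ℝ)
    (h : A = (U : Matrix n n ℂ) * Matrix.diagonal (fun i => (f i : ℂ)) * star (U : Matrix n n ℂ)) :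
    Finset.univ.val.map hA.eigenvalues = Finset.univ.val.map f := by
  have h1 := roots_charpoly_of_conj U (fun i => (f i : ℂ)) h
  have h2 := roots_charpoly_of_conj hA.eigenvectorUnitary
    (fun i => (hA.eigenvalues i : ℂ)) (by
      convert hA.spectral_theorem using 2
      rw [Unitary.conjStarAlgAut_apply]; rfl)
  apply Multiset.map_injective (f := (Complex.ofReal : ℝ → ℂ)) Complex.ofReal_injective
  rw [Multiset.map_map, Multiset.map_map]
  rw [show ((Complex.ofReal : ℝ → ℂ) ∘ hA.eigenvalues) = fun i => (hA.eigenvalues i : ℂ) from rfl,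
    ← h2, h1]
  rfl

lemma sum_g_eig {A : Matrix n n ℂ} (hA : A.IsHermitian) (U : Matrix.unitaryGroup n ℂ)
    (f : n → ℝ)
    (h : A = (U : Matrix n n ℂ) * Matrix.diagonal (fun i => (f i : ℂ)) * star (U : Matrix n n ℂ))
    (g : ℝ → ℝ) : ∑ i, g (hA.eigenvalues i) = ∑ i, g (f i) := by
  have hm := eig_multiset hA U f h
  calc ∑ i, g (hA.eigenvalues i) = ((Finset.univ.val.map hA.eigenvalues).map g).sum := by
        rw [Multiset.map_map]; rfl
    _ = ((Finset.univ.val.map f).map g).sum := by rw [hm]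
    _ = ∑ i, g (f i) := by rw [Multiset.map_map]; rfl

-- spectral decomposition restated with ℂ coercion
lemma spectral' {H : Matrix n n ℂ} (hH : H.IsHermitian) :
    H = (hH.eigenvectorUnitary : Matrix n n ℂ)
        * Matrix.diagonal (fun i => (hH.eigenvalues i : ℂ))
        * star (hH.eigenvectorUnitary : Matrix n n ℂ) := by
  convert hH.spectral_theorem using 2
  rw [Unitary.conjStarAlgAut_apply]; rfl

lemma herm_sq_decomp {H : Matrix n n ℂ} (hH : H.IsHermitian) :
    Hᴴ * H = (hH.eigenvectorUnitary : Matrix n n ℂ)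
        * Matrix.diagonal (fun i => ((hH.eigenvalues i ^ 2 : ℝ) : ℂ))
        * star (hH.eigenvectorUnitary : Matrix n n ℂ) := by
  have hU : star (hH.eigenvectorUnitary : Matrix n n ℂ) * hH.eigenvectorUnitary = 1 :=
    Matrix.mem_unitaryGroup_iff'.mp hH.eigenvectorUnitary.2
  conv_lhs => rw [hH.eq, spectral' hH]
  rw [show ∀ (U D : Matrix n n ℂ), U * D * star U * (U * D * star U)
      = U * (D * (star U * U) * D) * star U from fun U D => by noncomm_ring]
  rw [hU, mul_one, Matrix.diagonal_mul_diagonal]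
  congr 2
  ext i
  push_cast
  ring

lemma schatten1_hermitian {H : Matrix n n ℂ} (hH : H.IsHermitian) :
    (∑ i, Real.sqrt ((Matrix.isHermitian_conjTranspose_mul_self H).eigenvalues i))
      = ∑ i, |hH.eigenvalues i| := by
  rw [sum_g_eig (Matrix.isHermitian_conjTranspose_mul_self H) hH.eigenvectorUnitary
    (fun i => hH.eigenvalues i ^ 2) (herm_sq_decomp hH) Real.sqrt]
  exact Finset.sum_congr rfl fun i _ => Real.sqrt_sq_eq_abs _

lemma trace_eq_sum_eig {H : Matrix n n ℂ} (hH : H.IsHermitian) :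
    H.trace = ∑ i, (hH.eigenvalues i : ℂ) := by
  have hU : star (hH.eigenvectorUnitary : Matrix n n ℂ) * hH.eigenvectorUnitary = 1 :=
    Matrix.mem_unitaryGroup_iff'.mp hH.eigenvectorUnitary.2
  conv_lhs => rw [spectral' hH]
  rw [Matrix.trace_mul_cycle, hU, one_mul, Matrix.trace_diagonal]

lemma re_trace_eq_sum_eig {H : Matrix n n ℂ} (hH : H.IsHermitian) :
    H.trace.re = ∑ i, hH.eigenvalues i := by
  rw [trace_eq_sum_eig hH, Complex.re_sum]
  simp

lemma re_trace_conjTranspose_mul_self (M : Matrix n n ℂ) :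
    (Mᴴ * M).trace.re = ∑ p : n × n, Complex.normSq (M p.1 p.2) := by
  rw [Matrix.trace]
  rw [show ∑ i, (Mᴴ * M).diag i = ∑ j, ∑ i, star (M i j) * M i j from
    Finset.sum_congr rfl fun j _ => rfl]
  rw [Complex.re_sum]
  rw [Fintype.sum_prod_type, Finset.sum_comm]
  refine Finset.sum_congr rfl fun j _ => ?_
  rw [Complex.re_sum]
  refine Finset.sum_congr rfl fun i _ => ?_
  rw [Complex.star_def, ← Complex.normSq_eq_conj_mul_self]
  simp

lemma sum_eig_eq_entries (M : Matrix n n ℂ) :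
    ∑ i, (Matrix.isHermitian_conjTranspose_mul_self M).eigenvalues i
      = ∑ p : n × n, Complex.normSq (M p.1 p.2) := by
  rw [← re_trace_conjTranspose_mul_self, re_trace_eq_sum_eig]

lemma unitary_entry_abs_le (W : Matrix n n ℂ) (hW : W ∈ Matrix.unitaryGroup n ℂ) (i j : n) :
    ‖W i j‖ ≤ 1 := by
  have h1 : star W * W = 1 := Matrix.mem_unitaryGroup_iff'.mp hW
  have h2 : ∑ k, Complex.normSq (W k j) = 1 := by
    have h0 := congrFun (congrFun h1 j) j
    have h3 : (star W * W) j j = ∑ k, star (W k j) * W k j := rfl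
    rw [h3] at h0
    have h4 := congrArg Complex.re h0
    rw [Complex.re_sum] at h4
    simpa [Complex.star_def, ← Complex.normSq_eq_conj_mul_self] using h4
  have h5 : Complex.normSq (W i j) ≤ 1 := by
    rw [← h2]
    exact Finset.single_le_sum (f := fun k => Complex.normSq (W k j))
      (fun k _ => Complex.normSq_nonneg _) (Finset.mem_univ i)
  have h6 := Complex.sq_norm (W i j)
  nlinarith [norm_nonneg (W i j)]

lemma trace_mul_diagonal' (B : Matrix n n ℂ) (d : n → ℂ) :
    (B * Matrix.diagonal d).trace = ∑ i, B i i * d i := by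
  simp [Matrix.trace, Matrix.mul_diagonal, Matrix.diag]

lemma re_trace_unitary_mul_le {K : Matrix n n ℂ} (hK : K.IsHermitian)
    (W : Matrix n n ℂ) (hW : W ∈ Matrix.unitaryGroup n ℂ) :
    (W * K).trace.re ≤ ∑ i, |hK.eigenvalues i| := by
  set U : Matrix n n ℂ := (hK.eigenvectorUnitary : Matrix n n ℂ) with hUdef
  have hB : star U * W * U ∈ Matrix.unitaryGroup n ℂ :=
    mul_mem (mul_mem (Unitary.star_mem hK.eigenvectorUnitary.2) hW) hK.eigenvectorUnitary.2
  have key : (W * K).trace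
      = ∑ i, (star U * W * U) i i * (hK.eigenvalues i : ℂ) := by
    conv_lhs => rw [spectral' hK]
    rw [show W * (U * Matrix.diagonal (fun i => (hK.eigenvalues i : ℂ)) * star U)
        = W * (U * Matrix.diagonal (fun i => (hK.eigenvalues i : ℂ))) * star U from by
          noncomm_ring]
    rw [Matrix.trace_mul_cycle, ← mul_assoc, trace_mul_diagonal']
  rw [key, Complex.re_sum]
  refine Finset.sum_le_sum fun i _ => ?_
  have h1 : ((star U * W * U) i i * (hK.eigenvalues i : ℂ)).re
      = ((star U * W * U) i i).re * hK.eigenvalues i := by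
    simp [Complex.mul_re]
  rw [h1]
  calc ((star U * W * U) i i).re * hK.eigenvalues i
      ≤ |((star U * W * U) i i).re * hK.eigenvalues i| := le_abs_self _
    _ = |((star U * W * U) i i).re| * |hK.eigenvalues i| := abs_mul _ _
    _ ≤ 1 * |hK.eigenvalues i| := by
        refine mul_le_mul_of_nonneg_right ?_ (abs_nonneg _)
        exact (Complex.abs_re_le_norm _).trans (unitary_entry_abs_le _ hB i i)
    _ = |hK.eigenvalues i| := one_mul _

lemma exists_sign_unitary {H : Matrix n n ℂ} (hH : H.IsHermitian) :
    ∃ W ∈ Matrix.unitaryGroup n ℂ, (W * H).trace.re = ∑ i, |hH.eigenvalues i| := by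
  set U : Matrix n n ℂ := (hH.eigenvectorUnitary : Matrix n n ℂ) with hUdef
  set s : n → ℂ := fun i => if hH.eigenvalues i < 0 then -1 else 1 with hs
  have hsmem : Matrix.diagonal s ∈ Matrix.unitaryGroup n ℂ := by
    rw [Matrix.mem_unitaryGroup_iff]
    rw [Matrix.star_eq_conjTranspose, Matrix.diagonal_conjTranspose, Matrix.diagonal_mul_diagonal]
    ext i j
    rcases eq_or_ne i j with rfl | hij
    · by_cases h : hH.eigenvalues i < 0 <;> simp [hs, h]
    · simp [Matrix.diagonal_apply_ne _ hij, Matrix.one_apply_ne hij]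
  refine ⟨U * Matrix.diagonal s * star U,
    mul_mem (mul_mem hH.eigenvectorUnitary.2 hsmem) (Unitary.star_mem hH.eigenvectorUnitary.2), ?_⟩
  have hU1 : star U * U = 1 := Matrix.mem_unitaryGroup_iff'.mp hH.eigenvectorUnitary.2
  have key : (U * Matrix.diagonal s * star U) * H
      = U * Matrix.diagonal (fun i => ((|hH.eigenvalues i| : ℝ) : ℂ)) * star U := by
    conv_lhs => rw [spectral' hH]
    rw [show U * Matrix.diagonal s * star U
          * (U * Matrix.diagonal (fun i => (hH.eigenvalues i : ℂ)) * star U)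
        = U * (Matrix.diagonal s * (star U * U)
          * Matrix.diagonal (fun i => (hH.eigenvalues i : ℂ))) * star U from by noncomm_ring]
    rw [hU1, mul_one, Matrix.diagonal_mul_diagonal]
    congr 2
    ext i j
    rcases eq_or_ne i j with rfl | hij
    · by_cases h : hH.eigenvalues i < 0
      · simp [hs, h, abs_of_neg h]
      · simp [hs, h, abs_of_nonneg (not_lt.mp h)]
    · simp [Matrix.diagonal_apply_ne _ hij]
  rw [key, Matrix.trace_mul_cycle, hU1, one_mul, Matrix.trace_diagonal, Complex.re_sum]
  simp

lemma schatten1_add_le {A B : Matrix n n ℂ} (hA : A.IsHermitian) (hB : B.IsHermitian) :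
    schatten1 (A + B) ≤ schatten1 A + schatten1 B := by
  rw [schatten1, schatten1, schatten1, schatten1_hermitian (hA.add hB), schatten1_hermitian hA,
    schatten1_hermitian hB]
  obtain ⟨W, hW, hEq⟩ := exists_sign_unitary (hA.add hB)
  rw [← hEq]
  have : (W * (A + B)).trace.re = (W * A).trace.re + (W * B).trace.re := by
    rw [mul_add, Matrix.trace_add, Complex.add_re]
  rw [this]
  exact add_le_add (re_trace_unitary_mul_le hA W hW) (re_trace_unitary_mul_le hB W hW)
open scoped ComplexOrder

lemma schatten1_nonneg (M : Matrix n n ℂ) : 0 ≤ schatten1 M :=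
  Finset.sum_nonneg fun _ _ => Real.sqrt_nonneg _

lemma eig_nonneg (M : Matrix n n ℂ) (i : n) :
    0 ≤ (Matrix.isHermitian_conjTranspose_mul_self M).eigenvalues i :=
  (Matrix.posSemidef_conjTranspose_mul_self M).eigenvalues_nonneg i

lemma eigenvalues_congr {A B : Matrix n n ℂ} (hA : A.IsHermitian) (hB : B.IsHermitian)
    (h : A = B) : hA.eigenvalues = hB.eigenvalues := by subst h; rfl

lemma schatten1_neg (M : Matrix n n ℂ) : schatten1 (-M) = schatten1 M := by
  unfold schatten1
  rw [eigenvalues_congr (Matrix.isHermitian_conjTranspose_mul_self (-M))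
    (Matrix.isHermitian_conjTranspose_mul_self M)
    (by rw [Matrix.conjTranspose_neg, neg_mul_neg])]

lemma schatten1_le_sqrt_card (M : Matrix n n ℂ) :
    schatten1 M ≤ Real.sqrt (Fintype.card n)
      * Real.sqrt (∑ i, (Matrix.isHermitian_conjTranspose_mul_self M).eigenvalues i) := by
  have h1 : (schatten1 M) ^ 2
      ≤ (Fintype.card n) * ∑ i, (Matrix.isHermitian_conjTranspose_mul_self M).eigenvalues i := by
    calc (schatten1 M) ^ 2
        ≤ (Finset.univ.card : ℝ)
          * ∑ i, (Real.sqrt ((Matrix.isHermitian_conjTranspose_mul_self M).eigenvalues i)) ^ 2 :=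
          sq_sum_le_card_mul_sum_sq
      _ = (Fintype.card n) * ∑ i, (Matrix.isHermitian_conjTranspose_mul_self M).eigenvalues i := by
          rw [Finset.card_univ]
          congr 1
          exact Finset.sum_congr rfl fun i _ => Real.sq_sqrt (eig_nonneg M i)
  have h2 := Real.sqrt_le_sqrt h1
  rwa [Real.sqrt_sq (schatten1_nonneg M), Real.sqrt_mul (by positivity)] at h2

lemma sqrt_sum_le_schatten1 (M : Matrix n n ℂ) :
    Real.sqrt (∑ i, (Matrix.isHermitian_conjTranspose_mul_self M).eigenvalues i) ≤ schatten1 M := by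
  rw [← Real.sqrt_sq (schatten1_nonneg M)]
  apply Real.sqrt_le_sqrt
  calc ∑ i, (Matrix.isHermitian_conjTranspose_mul_self M).eigenvalues i
      = ∑ i, (Real.sqrt ((Matrix.isHermitian_conjTranspose_mul_self M).eigenvalues i)) ^ 2 :=
        Finset.sum_congr rfl fun i _ => (Real.sq_sqrt (eig_nonneg M i)).symm
    _ ≤ (schatten1 M) ^ 2 :=
        Finset.sum_sq_le_sq_sum_of_nonneg fun i _ => Real.sqrt_nonneg _

lemma log_diff_le {x y D : ℝ} (hx : 1 ≤ x) (hy : 1 ≤ y) (hD : 0 ≤ D) (h : x - y ≤ D) :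
    Real.log x - Real.log y ≤ D := by
  rcases le_total x y with hxy | hxy
  · have hlog : Real.log x ≤ Real.log y := Real.log_le_log (by linarith) hxy
    linarith
  · have hy0 : 0 < y := by linarith
    have hx0 : 0 < x := by linarith
    have h1 : Real.log x - Real.log y = Real.log (x / y) := (Real.log_div hx0.ne' hy0.ne').symm
    have h2 : Real.log (x / y) ≤ x / y - 1 := Real.log_le_sub_one_of_pos (by positivity)
    have h3 : x / y - 1 ≤ x - y := by
      rw [div_sub_one hy0.ne']
      calc (x - y) / y ≤ x - y := div_le_self (by linarith) hy
        _ = x - y := rfl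
    linarith

lemma pt_isHermitian {ρ : Matrix (a × b) (a × b) ℂ} (h : ρ.IsHermitian) :
    (partialTranspose ρ).IsHermitian := by
  have key : ∀ p q, star (ρ q p) = ρ p q := fun p q => by
    conv_rhs => rw [← h]
    rw [Matrix.conjTranspose_apply]
  show (partialTranspose ρ)ᴴ = partialTranspose ρ
  refine Matrix.ext fun p q => ?_
  rw [Matrix.conjTranspose_apply]
  exact key _ _

lemma pt_trace (ρ : Matrix (a × b) (a × b) ℂ) : (partialTranspose ρ).trace = ρ.trace := by
  simp [Matrix.trace, Matrix.diag, partialTranspose]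

lemma pt_sub (ρ σ : Matrix (a × b) (a × b) ℂ) :
    partialTranspose (ρ - σ) = partialTranspose ρ - partialTranspose σ := rfl

lemma pt_entry_sum (M : Matrix (a × b) (a × b) ℂ) :
    ∑ p : (a × b) × (a × b), Complex.normSq (partialTranspose M p.1 p.2)
      = ∑ p : (a × b) × (a × b), Complex.normSq (M p.1 p.2) := by
  exact Fintype.sum_equiv
    (⟨fun p => ((p.2.1, p.1.2), (p.1.1, p.2.2)), fun p => ((p.2.1, p.1.2), (p.1.1, p.2.2)),
      fun p => rfl, fun p => rfl⟩ : ((a × b) × (a × b)) ≃ ((a × b) × (a × b)))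
    _ _ (fun p => rfl)

lemma schatten1_pt_le (X : Matrix (a × b) (a × b) ℂ) :
    schatten1 (partialTranspose X) ≤ Real.sqrt (Fintype.card (a × b)) * schatten1 X := by
  calc schatten1 (partialTranspose X)
      ≤ Real.sqrt (Fintype.card (a × b)) * Real.sqrt
          (∑ i, (Matrix.isHermitian_conjTranspose_mul_self (partialTranspose X)).eigenvalues i) :=
        schatten1_le_sqrt_card _
    _ = Real.sqrt (Fintype.card (a × b)) * Real.sqrt
          (∑ i, (Matrix.isHermitian_conjTranspose_mul_self X).eigenvalues i) := by
        rw [sum_eig_eq_entries, sum_eig_eq_entries, pt_entry_sum]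
    _ ≤ Real.sqrt (Fintype.card (a × b)) * schatten1 X :=
        mul_le_mul_of_nonneg_left (sqrt_sum_le_schatten1 X) (Real.sqrt_nonneg _)

lemma one_le_schatten1_pt {ρ : Matrix (a × b) (a × b) ℂ} (hρ : ρ.IsHermitian)
    (h1 : ρ.trace = 1) : 1 ≤ schatten1 (partialTranspose ρ) := by
  have hH := pt_isHermitian hρ
  have ht : (partialTranspose ρ).trace = 1 := by rw [pt_trace, h1]
  have hre : ∑ i, hH.eigenvalues i = (1 : ℝ) := by
    have h2 := re_trace_eq_sum_eig hH
    rw [ht] at h2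
    simpa using h2.symm
  have heq : schatten1 (partialTranspose ρ) = ∑ i, |hH.eigenvalues i| := schatten1_hermitian hH
  rw [heq, ← hre]
  exact Finset.sum_le_sum fun i _ => le_abs_self _

theorem abs_logNeg_sub_logNeg_le_aux (ρ σ : Matrix (a × b) (a × b) ℂ)
    (hρ : ρ.PosSemidef) (hρ1 : ρ.trace = 1)
    (hσ : σ.PosSemidef) (hσ1 : σ.trace = 1)
    (ε : ℝ) (hd : traceNorm (ρ - σ) ≤ ε) :
    |logNeg ρ - logNeg σ| ≤ Real.sqrt (Fintype.card (a × b)) * ε / Real.log 2 := by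
  have hTN : ∀ M : Matrix (a × b) (a × b) ℂ, traceNorm M = schatten1 M := fun _ => rfl
  set D : ℝ := Real.sqrt (Fintype.card (a × b)) * ε with hD
  have hHh : (partialTranspose ρ).IsHermitian := pt_isHermitian hρ.1
  have hKh : (partialTranspose σ).IsHermitian := pt_isHermitian hσ.1
  have hε0 : 0 ≤ ε := (schatten1_nonneg (ρ - σ)).trans ((hTN _) ▸ hd)
  have hD0 : 0 ≤ D := mul_nonneg (Real.sqrt_nonneg _) hε0
  have hb : schatten1 (partialTranspose (ρ - σ)) ≤ D := by
    refine (schatten1_pt_le _).trans ?_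
    exact mul_le_mul_of_nonneg_left ((hTN _) ▸ hd) (Real.sqrt_nonneg _)
  set x := schatten1 (partialTranspose ρ) with hx
  set y := schatten1 (partialTranspose σ) with hy
  have hx1 : 1 ≤ x := one_le_schatten1_pt hρ.1 hρ1
  have hy1 : 1 ≤ y := one_le_schatten1_pt hσ.1 hσ1
  have t1 : x - y ≤ D := by
    have h := schatten1_add_le hKh (hHh.sub hKh)
    have he : partialTranspose σ + (partialTranspose ρ - partialTranspose σ)
        = partialTranspose ρ := by abel
    rw [he] at h
    have h2 : schatten1 (partialTranspose ρ - partialTranspose σ) ≤ D := by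
      rw [← pt_sub]; exact hb
    have := h.trans (add_le_add le_rfl h2)
    linarith
  have t2 : y - x ≤ D := by
    have h := schatten1_add_le hHh (hKh.sub hHh)
    have he : partialTranspose ρ + (partialTranspose σ - partialTranspose ρ)
        = partialTranspose σ := by abel
    rw [he] at h
    have h2 : schatten1 (partialTranspose σ - partialTranspose ρ) ≤ D := by
      have hneg : partialTranspose σ - partialTranspose ρ
          = -(partialTranspose ρ - partialTranspose σ) := by abel
      rw [hneg, schatten1_neg, ← pt_sub]
      exact hb
    have := h.trans (add_le_add le_rfl h2)
    linarith
  have habs : |Real.log x - Real.log y| ≤ D :=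
    abs_sub_le_iff.mpr ⟨log_diff_le hx1 hy1 hD0 t1, log_diff_le hy1 hx1 hD0 t2⟩
  have hlog2 : (0 : ℝ) < Real.log 2 := Real.log_pos one_lt_two
  rw [logNeg, logNeg, hTN, hTN, ← hx, ← hy, ← Real.log_div_log, ← Real.log_div_log,
    div_sub_div_same, abs_div, abs_of_pos hlog2]
  exact (div_le_div_iff_of_pos_right hlog2).mpr habs

/-- Continuity of logarithmic negativity: if two density matrices `ρ, σ` on a bipartite
space of total dimension `d` satisfy `‖ρ - σ‖₁ ≤ ε`, then
`|E_N(ρ) - E_N(σ)| ≤ √d · ε / ln 2`. -/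
theorem abs_logNeg_sub_logNeg_le (ρ σ : Matrix (a × b) (a × b) ℂ)
    (hρ : ρ.PosSemidef) (hρ1 : ρ.trace = 1)
    (hσ : σ.PosSemidef) (hσ1 : σ.trace = 1)
    (ε : ℝ) (hd : traceNorm (ρ - σ) ≤ ε) :
    |logNeg ρ - logNeg σ| ≤ Real.sqrt (Fintype.card (a × b)) * ε / Real.log 2 :=
  abs_logNeg_sub_logNeg_le_aux ρ σ hρ hρ1 hσ hσ1 ε hd
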